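/- Let p ≥ 2 and suppose a positive non-decreasing sequence (A_k) satisfies A_k ≥ c' (Σ_{j=1}^k A_j^{(p−1)/(3p+1)})^{(3p+1)/(p+1)} for all k ≥ 1, with c' > 0. Then A_k ≥ (2/(p+1) · c'^{(p+1)/(3p+1)} · k)^{(3p+1)/2} for all k ≥ 1. -/

import Mathlib

open Real Finset

/-- Strict Bernoulli consequence: `(k+1)^(β+1) - (β+1)(k+1)^β < k^(β+1)` for `k ≥ 1`, `β > 0`. -/
lemma bern_strict (β : ℝ) (hβ : 0 < β) (k : ℕ) (hk : 1 ≤ k) :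
    ((k:ℝ)+1) ^ (β+1) - (β+1) * ((k:ℝ)+1) ^ β < (k:ℝ) ^ (β+1) := by
  have hk1 : (1:ℝ) ≤ (k:ℝ) := by exact_mod_cast hk
  have hkp : (0:ℝ) < (k:ℝ) + 1 := by linarith
  set s : ℝ := -(1/((k:ℝ)+1)) with hs_def
  have hs1 : -1 ≤ s := by
    rw [hs_def]
    have : 1/((k:ℝ)+1) ≤ 1 := by
      rw [div_le_one hkp]; linarith
    linarith
  have hs0 : s ≠ 0 := by
    have : 0 < 1/((k:ℝ)+1) := by positivity
    rw [hs_def]; linarith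
  have hB := one_add_mul_self_lt_rpow_one_add hs1 hs0 (by linarith : (1:ℝ) < β + 1)
  have h1s : 1 + s = (k:ℝ)/((k:ℝ)+1) := by
    rw [hs_def]; field_simp; ring
  rw [h1s] at hB
  have hpow : ((k:ℝ)/((k:ℝ)+1)) ^ (β+1) = (k:ℝ)^(β+1) / ((k:ℝ)+1)^(β+1) := by
    rw [Real.div_rpow (by linarith) hkp.le]
  rw [hpow] at hB
  have hKpow : (0:ℝ) < ((k:ℝ)+1)^(β+1) := Real.rpow_pos_of_pos hkp _
  have hmul := (mul_lt_mul_of_pos_right hB hKpow)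
  have hcancel : (k:ℝ)^(β+1) / ((k:ℝ)+1)^(β+1) * ((k:ℝ)+1)^(β+1) = (k:ℝ)^(β+1) := by
    field_simp
  rw [hcancel] at hmul
  have hsplit : ((k:ℝ)+1)^(β+1) = ((k:ℝ)+1)^β * ((k:ℝ)+1) := by
    rw [Real.rpow_add_one hkp.ne']
  calc ((k:ℝ)+1) ^ (β+1) - (β+1) * ((k:ℝ)+1) ^ β
      = (1 + (β+1)*s) * ((k:ℝ)+1)^(β+1) := by
        rw [hsplit, hs_def]; field_simp; ring
    _ < (k:ℝ)^(β+1) := hmul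

/-- Concavity step: for `c^β ≤ x ≤ y`, `(c*y)^(β/(β+1)) - (c*x)^(β/(β+1)) ≤ y - x`. -/
lemma concave_step (β c : ℝ) (hβ : 0 < β) (hc : 0 < c) (x y : ℝ)
    (hx : c ^ β ≤ x) (hxy : x ≤ y) :
    (c*y) ^ (β/(β+1)) - (c*x) ^ (β/(β+1)) ≤ y - x := by
  set γ : ℝ := β/(β+1) with hγ_def
  have hβ1 : (0:ℝ) < β + 1 := by linarith
  have hγ0 : 0 < γ := by positivity
  have hγ1 : γ < 1 := by rw [hγ_def, div_lt_one hβ1]; linarith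
  have hxpos : 0 < x := lt_of_lt_of_le (Real.rpow_pos_of_pos hc β) hx
  have hypos : 0 < y := lt_of_lt_of_le hxpos hxy
  -- (c*y)^γ = (c*x)^γ * (y/x)^γ
  have hsplit : (c*y) ^ γ = (c*x) ^ γ * (y/x) ^ γ := by
    rw [← Real.mul_rpow (by positivity) (by positivity)]
    congr 1
    field_simp
  -- Bernoulli: (y/x)^γ ≤ 1 + γ*(y/x - 1)
  have hs1 : -1 ≤ y/x - 1 := by
    have : 0 < y/x := by positivity
    linarith
  have hB := rpow_one_add_le_one_add_mul_self hs1 hγ0.le hγ1.le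
  have h1s : 1 + (y/x - 1) = y/x := by ring
  rw [h1s] at hB
  -- (c*x)^γ ≤ x
  have hcx : (c*x) ^ γ ≤ x := by
    have h1 : (c*x) ^ γ = c ^ γ * x ^ γ := Real.mul_rpow hc.le hxpos.le
    have h2 : c ^ γ ≤ x ^ (1-γ) := by
      have : (c ^ β) ^ (1-γ) ≤ x ^ (1-γ) :=
        Real.rpow_le_rpow (by positivity) hx (by linarith)
      rwa [← Real.rpow_mul hc.le,
        show β * (1-γ) = γ by rw [hγ_def]; field_simp; ring] at this
    calc (c*x) ^ γ = c ^ γ * x ^ γ := h1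
      _ ≤ x ^ (1-γ) * x ^ γ := by
          apply mul_le_mul_of_nonneg_right h2 (by positivity)
      _ = x := by rw [← Real.rpow_add hxpos]; simp
  have hcxpos : 0 < (c*x) ^ γ := Real.rpow_pos_of_pos (by positivity) _
  calc (c*y) ^ γ - (c*x) ^ γ = (c*x) ^ γ * (y/x) ^ γ - (c*x) ^ γ := by rw [hsplit]
    _ ≤ (c*x) ^ γ * (1 + γ * (y/x - 1)) - (c*x) ^ γ := by
        apply sub_le_sub_right
        exact mul_le_mul_of_nonneg_left hB hcxpos.le
    _ = (c*x) ^ γ * γ * ((y-x)/x) := by field_simp; ring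
    _ ≤ x * 1 * ((y-x)/x) := by
        apply mul_le_mul_of_nonneg_right
        · apply mul_le_mul hcx hγ1.le hγ0.le hxpos.le
        · exact div_nonneg (by linarith) hxpos.le
    _ = y - x := by field_simp

/-- Key lemma: if `B k ^ ((β+1)/β) ≥ c ∑_{j≤k} B j` for positive `B`, then the
partial sums grow like `k^(β+1)`. -/
lemma key_lemma (β c : ℝ) (hβ : 0 < β) (hc : 0 < c) (B : ℕ → ℝ)
    (hpos : ∀ k, 1 ≤ k → 0 < B k)
    (hrec : ∀ k, 1 ≤ k → (B k) ^ ((β+1)/β) ≥ c * ∑ j ∈ Finset.Icc 1 k, B j) :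
    ∀ k : ℕ, 1 ≤ k →
      (c/(β+1)) ^ β / (β+1) * (k:ℝ) ^ (β+1) ≤ ∑ j ∈ Finset.Icc 1 k, B j := by
  set γ : ℝ := β/(β+1) with hγ_def
  set E : ℝ := (c/(β+1)) ^ β / (β+1) with hE_def
  set S : ℕ → ℝ := fun k => ∑ j ∈ Finset.Icc 1 k, B j with hS_def
  have hβ1 : (0:ℝ) < β + 1 := by linarith
  have hd : 0 < c/(β+1) := by positivity
  have hEpos : 0 < E := by rw [hE_def]; positivity
  have hSpos : ∀ k, 1 ≤ k → 0 < S k := by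
    intro k hk
    simp only [hS_def]
    exact Finset.sum_pos (fun j hj => hpos j (Finset.mem_Icc.mp hj).1)
      ⟨1, Finset.mem_Icc.mpr ⟨le_refl 1, hk⟩⟩
  have hB1 : c ^ β ≤ B 1 := by
    have h := hrec 1 le_rfl
    have hS1 : S 1 = B 1 := by rw [hS_def]; simp
    have hB1pos := hpos 1 le_rfl
    rw [show Finset.Icc 1 1 = {1} from Finset.Icc_self 1, Finset.sum_singleton] at h
    have hsplit : B 1 ^ ((β+1)/β) = B 1 ^ (1/β) * B 1 := by
      rw [show (β+1)/β = 1/β + 1 by field_simp; ring, Real.rpow_add hB1pos, Real.rpow_one]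
    rw [hsplit] at h
    have h2 : c ≤ B 1 ^ (1/β) := by
      have := (mul_le_mul_iff_of_pos_right hB1pos).mp h
      linarith
    calc c ^ β ≤ (B 1 ^ (1/β)) ^ β := Real.rpow_le_rpow hc.le h2 hβ.le
      _ = B 1 := by
          rw [← Real.rpow_mul hB1pos.le, show 1/β * β = 1 by field_simp, Real.rpow_one]
  have hScβ : ∀ k, 1 ≤ k → c ^ β ≤ S k := by
    intro k hk
    refine hB1.trans ?_
    apply Finset.single_le_sum (f := B) (fun j hj => (hpos j (Finset.mem_Icc.mp hj).1).le)
    exact Finset.mem_Icc.mpr ⟨le_rfl, hk⟩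
  have hBge : ∀ k, 1 ≤ k → (c * S k) ^ γ ≤ B k := by
    intro k hk
    have h := hrec k hk
    have hcS : 0 ≤ c * S k := mul_nonneg hc.le (hSpos k hk).le
    calc (c * S k) ^ γ ≤ (B k ^ ((β+1)/β)) ^ γ :=
          Real.rpow_le_rpow hcS h (by rw [hγ_def]; positivity)
      _ = B k := by
          rw [← Real.rpow_mul (hpos k hk).le,
            show (β+1)/β * γ = 1 by rw [hγ_def]; field_simp, Real.rpow_one]
  intro k hk
  induction k, hk using Nat.le_induction with
  | base =>
      have hE : E ≤ c ^ β := by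
        rw [hE_def]
        calc (c/(β+1)) ^ β / (β+1) ≤ (c/(β+1)) ^ β :=
              div_le_self (by positivity) (by linarith)
          _ ≤ c ^ β := Real.rpow_le_rpow hd.le (by
                rw [div_le_iff₀ hβ1]; nlinarith) hβ.le
      simpa [Real.one_rpow] using hE.trans hB1
  | succ k hk1 ih =>
      by_contra hcon
      push_neg at hcon
      set T : ℝ := E * ((k:ℝ)+1) ^ (β+1) with hT_def
      have hcast : ((k+1 : ℕ) : ℝ) = (k:ℝ) + 1 := by push_cast; ring
      rw [hcast] at hcon
      have hsum : S (k+1) = S k + B (k+1) := by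
        rw [hS_def]
        exact Finset.sum_Icc_succ_top (by omega) B
      have hBk1 := hBge (k+1) (by omega)
      have h1 : S k ≤ S (k+1) - (c * S (k+1)) ^ γ := by linarith
      have hcs := concave_step β c hβ hc (S (k+1)) T (hScβ (k+1) (by omega)) hcon.le
      have h2 : S k ≤ T - (c * T) ^ γ := by linarith
      have hcT : (c * T) ^ γ = (c/(β+1)) ^ β * ((k:ℝ)+1) ^ β := by
        have hcE : c * E = (c/(β+1)) ^ (β+1) := by
          rw [hE_def, Real.rpow_add_one hd.ne']
          field_simp
        have hk1pos : (0:ℝ) < (k:ℝ)+1 := by positivity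
        have : c * T = ((c/(β+1)) * ((k:ℝ)+1)) ^ (β+1) := by
          rw [hT_def, ← mul_assoc, hcE, ← Real.mul_rpow hd.le hk1pos.le]
        rw [this, ← Real.rpow_mul (by positivity),
          show (β+1) * γ = β by rw [hγ_def]; field_simp,
          Real.mul_rpow hd.le hk1pos.le]
      have hbern := bern_strict β hβ k hk1
      have hEβ : E * (β+1) = (c/(β+1)) ^ β := by
        rw [hE_def]; field_simp
      have hihk : E * (k:ℝ) ^ (β+1) ≤ S k := ih
      have h5 := mul_lt_mul_of_pos_left hbern hEpos
      rw [mul_sub, ← mul_assoc, hEβ] at h5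
      linarith [h2, hcT, hT_def, h5, hihk]



/-- If a positive non-decreasing sequence satisfies
`A k ≥ c' (∑_{j≤k} A j^{(p-1)/(3p+1)})^{(3p+1)/(p+1)}`, then
`A k ≥ (2/(p+1) · c'^{(p+1)/(3p+1)} · k)^{(3p+1)/2}`. -/
theorem A_growth (p : ℕ) (hp : 2 ≤ p) (c' : ℝ) (hc' : 0 < c') (A : ℕ → ℝ)
    (hApos : ∀ k, 1 ≤ k → 0 < A k)
    (hAmono : ∀ j k, 1 ≤ j → j ≤ k → A j ≤ A k)
    (hrec : ∀ k, 1 ≤ k →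
      A k ≥ c' * (∑ j ∈ Finset.Icc 1 k, (A j) ^ (((p : ℝ) - 1) / (3 * p + 1))) ^
        ((3 * (p : ℝ) + 1) / (p + 1))) :
    ∀ k : ℕ, 1 ≤ k →
      A k ≥ (2 / ((p : ℝ) + 1) * c' ^ (((p : ℝ) + 1) / (3 * p + 1)) * k) ^
        ((3 * (p : ℝ) + 1) / 2) := by
  intro k hk
  have hq2 : (2:ℝ) ≤ (p:ℝ) := by exact_mod_cast hp
  set q : ℝ := (p : ℝ) with hq_def
  have hq1 : (0:ℝ) < q - 1 := by linarith
  have h3q : (0:ℝ) < 3*q + 1 := by linarith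
  have hqp1 : (0:ℝ) < q + 1 := by linarith
  set β : ℝ := (q-1)/2 with hβ_def
  have hβ : 0 < β := by rw [hβ_def]; positivity
  have hβ1 : β + 1 = (q+1)/2 := by rw [hβ_def]; ring
  set c : ℝ := c' ^ ((q+1)/(3*q+1)) with hc_def
  have hc : 0 < c := Real.rpow_pos_of_pos hc' _
  set B : ℕ → ℝ := fun j => (A j) ^ ((q-1)/(3*q+1)) with hB_def
  have hpos : ∀ j, 1 ≤ j → 0 < B j := fun j hj => Real.rpow_pos_of_pos (hApos j hj) _
  have hSnn : ∀ m : ℕ, 0 ≤ ∑ j ∈ Finset.Icc 1 m, B j := by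
    intro m
    apply Finset.sum_nonneg
    intro j hj
    exact (hpos j (Finset.mem_Icc.mp hj).1).le
  have hrecB : ∀ m, 1 ≤ m → (B m) ^ ((β+1)/β) ≥ c * ∑ j ∈ Finset.Icc 1 m, B j := by
    intro m hm
    have h := hrec m hm
    have hAm := hApos m hm
    have hSm := hSnn m
    have hexp : (β+1)/β = (q+1)/(q-1) := by
      rw [hβ1, hβ_def]
      field_simp
      try ring
    have hBm : (B m) ^ ((β+1)/β) = (A m) ^ ((q+1)/(3*q+1)) := by
      rw [hexp, hB_def, ← Real.rpow_mul hAm.le]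
      congr 1
      field_simp
    have h2 : (c' * (∑ j ∈ Finset.Icc 1 m, B j) ^ ((3*q+1)/(q+1))) ^ ((q+1)/(3*q+1))
        ≤ (A m) ^ ((q+1)/(3*q+1)) := by
      apply Real.rpow_le_rpow _ h (by positivity)
      positivity
    have h3 : (c' * (∑ j ∈ Finset.Icc 1 m, B j) ^ ((3*q+1)/(q+1))) ^ ((q+1)/(3*q+1))
        = c * ∑ j ∈ Finset.Icc 1 m, B j := by
      rw [Real.mul_rpow hc'.le (by positivity), ← Real.rpow_mul hSm,
        show (3*q+1)/(q+1) * ((q+1)/(3*q+1)) = 1 by field_simp, Real.rpow_one, hc_def]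
    rw [hBm]
    rw [h3] at h2
    exact h2
  have key := key_lemma β c hβ hc B hpos hrecB k hk
  set d : ℝ := c/(β+1) with hd_def
  have hdpos : 0 < d := by rw [hd_def]; positivity
  have hE : (c/(β+1)) ^ β / (β+1) = d ^ (β+1) / c := by
    rw [Real.rpow_add_one hdpos.ne', hd_def]
    field_simp
    try ring
  rw [hE] at key
  have hkpos : (0:ℝ) < (k:ℝ) := by exact_mod_cast hk
  have hfin : c' * (∑ j ∈ Finset.Icc 1 k, B j) ^ ((3*q+1)/(q+1)) ≤ A k := hrec k hk
  have hmid : c' * (d ^ (β+1) / c * (k:ℝ) ^ (β+1)) ^ ((3*q+1)/(q+1))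
      ≤ c' * (∑ j ∈ Finset.Icc 1 k, B j) ^ ((3*q+1)/(q+1)) := by
    apply mul_le_mul_of_nonneg_left _ hc'.le
    apply Real.rpow_le_rpow (by positivity) key (by positivity)
  have hval : c' * (d ^ (β+1) / c * (k:ℝ) ^ (β+1)) ^ ((3*q+1)/(q+1))
      = (d * (k:ℝ)) ^ ((3*q+1)/2) := by
    have h1 : d ^ (β+1) / c * (k:ℝ) ^ (β+1) = (d * (k:ℝ)) ^ (β+1) / c := by
      rw [Real.mul_rpow hdpos.le hkpos.le]
      ring
    rw [h1, Real.div_rpow (by positivity) hc.le, ← Real.rpow_mul (by positivity),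
      show (β+1) * ((3*q+1)/(q+1)) = (3*q+1)/2 by rw [hβ1]; field_simp,
      hc_def, ← Real.rpow_mul hc'.le,
      show (q+1)/(3*q+1) * ((3*q+1)/(q+1)) = 1 by field_simp, Real.rpow_one]
    rw [mul_div_cancel₀ _ hc'.ne']
  have hd2 : d = 2/(q+1) * c' ^ ((q+1)/(3*q+1)) := by
    rw [hd_def, hβ1, hc_def]
    field_simp
  rw [hval, hd2] at hmid
  calc (2/(q+1) * c' ^ ((q+1)/(3*q+1)) * (k:ℝ)) ^ ((3*q+1)/2)
      ≤ c' * (∑ j ∈ Finset.Icc 1 k, B j) ^ ((3*q+1)/(q+1)) := hmid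
    _ ≤ A k := hfin
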